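/- Let d ≥ 1, let Ω ⊆ ℝ^d be a nonempty bounded open set, let ε > 0 and k > 0, and let u, w ∈ V. If the convex-splitting equation tested with u − w holds, i.e. (1/k)∫_Ω (u − w)² dx + ∫_Ω ⟨∇u, ∇(u − w)⟩ dx + (1/ε²)∫_Ω (u³ − w)(u − w) dx = 0, then J_ε(u) ≤ J_ε(w). (In fact J_ε(u) + (1/k)∫_Ω (u − w)² dx ≤ J_ε(w).) -/

import Mathlib

open MeasureTheory Set RealInnerProductSpace

section aux
variable {d : ℕ}

lemma grad_cont {u : EuclideanSpace ℝ (Fin d) → ℝ} (hu : ContDiff ℝ 1 u) :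
    Continuous fun x => gradient u x := by
  have h : Continuous (fderiv ℝ u) := hu.continuous_fderiv one_ne_zero
  exact (InnerProductSpace.toDual ℝ _).symm.continuous.comp h

lemma grad_sub {u w : EuclideanSpace ℝ (Fin d) → ℝ} (hu : ContDiff ℝ 1 u)
    (hw : ContDiff ℝ 1 w) (x : EuclideanSpace ℝ (Fin d)) :
    gradient (fun y => u y - w y) x = gradient u x - gradient w x := by
  have h1 : DifferentiableAt ℝ u x := (hu.differentiable one_ne_zero).differentiableAt
  have h2 : DifferentiableAt ℝ w x := (hw.differentiable one_ne_zero).differentiableAt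
  simp only [gradient, fderiv_fun_sub h1 h2, map_sub]

lemma integrableOn_of_cont {Ω : Set (EuclideanSpace ℝ (Fin d))}
    (hΩbd : Bornology.IsBounded Ω) {f : EuclideanSpace ℝ (Fin d) → ℝ}
    (hf : Continuous f) : IntegrableOn f Ω := by
  exact ((hf.continuousOn).integrableOn_compact hΩbd.isCompact_closure).mono_set
    subset_closure
end aux

theorem stmt_3 (d : ℕ) (hd : 1 ≤ d)
    (Ω : Set (EuclideanSpace ℝ (Fin d))) (hΩne : Ω.Nonempty)
    (hΩbd : Bornology.IsBounded Ω) (hΩop : IsOpen Ω)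
    (ε k : ℝ) (hε : 0 < ε) (hk0 : 0 < k)
    (J : (EuclideanSpace ℝ (Fin d) → ℝ) → ℝ)
    (hJ : ∀ v, J v = ∫ x in Ω,
      (1 / 2 * ‖gradient v x‖ ^ 2 + 1 / ε ^ 2 * (1 / 4 * ((v x) ^ 2 - 1) ^ 2)))
    (u w : EuclideanSpace ℝ (Fin d) → ℝ)
    (hu : ContDiff ℝ 1 u) (hw : ContDiff ℝ 1 w)
    (hscheme : 1 / k * (∫ x in Ω, (u x - w x) ^ 2)
      + (∫ x in Ω, ⟪gradient u x, gradient (fun y => u y - w y) x⟫)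
      + 1 / ε ^ 2 * (∫ x in Ω, ((u x) ^ 3 - w x) * (u x - w x)) = 0) :
    J u ≤ J w ∧ J u + 1 / k * (∫ x in Ω, (u x - w x) ^ 2) ≤ J w := by
  have hcu := hu.continuous
  have hcw := hw.continuous
  have hgu := grad_cont hu
  have hgw := grad_cont hw
  set c : ℝ := 1 / ε ^ 2 with hc
  have hc0 : 0 < c := by positivity
  -- integrands
  set fU : EuclideanSpace ℝ (Fin d) → ℝ := fun x =>
    1 / 2 * ‖gradient u x‖ ^ 2 + c * (1 / 4 * ((u x) ^ 2 - 1) ^ 2) with hfU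
  set fW : EuclideanSpace ℝ (Fin d) → ℝ := fun x =>
    1 / 2 * ‖gradient w x‖ ^ 2 + c * (1 / 4 * ((w x) ^ 2 - 1) ^ 2) with hfW
  set g : EuclideanSpace ℝ (Fin d) → ℝ := fun x =>
    ⟪gradient u x, gradient (fun y => u y - w y) x⟫ with hg
  set h3 : EuclideanSpace ℝ (Fin d) → ℝ := fun x =>
    ((u x) ^ 3 - w x) * (u x - w x) with hh3
  have hgrad_eq : ∀ x, gradient (fun y => u y - w y) x = gradient u x - gradient w x :=
    grad_sub hu hw
  have hcg : Continuous g := by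
    have : Continuous fun x => gradient u x - gradient w x := hgu.sub hgw
    have : g = fun x => ⟪gradient u x, gradient u x - gradient w x⟫ := by
      funext x; simp only [hg]; rw [hgrad_eq x]
    rw [this]
    exact hgu.inner (hgu.sub hgw)
  have hch3 : Continuous h3 := by fun_prop
  have hcfU : Continuous fU := by
    apply Continuous.add
    · exact (continuous_const.mul ((hgu.norm).pow 2))
    · fun_prop
  have hcfW : Continuous fW := by
    apply Continuous.add
    · exact (continuous_const.mul ((hgw.norm).pow 2))
    · fun_prop
  have iU := integrableOn_of_cont hΩbd hcfU
  have iW := integrableOn_of_cont hΩbd hcfW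
  have ig := integrableOn_of_cont hΩbd hcg
  have ih3 := integrableOn_of_cont hΩbd hch3
  -- pointwise inequality : fU ≤ g + c * h3 + fW
  have hpt : ∀ x, fU x ≤ g x + c * h3 x + fW x := by
    intro x
    have hgx := hgrad_eq x
    set a := gradient u x
    set b := gradient w x
    have h1 : g x = ‖a‖ ^ 2 - ⟪a, b⟫ := by
      simp only [hg]
      rw [hgx, inner_sub_right, real_inner_self_eq_norm_sq]
    have h2 : ⟪a, b⟫ ≤ ‖a‖ * ‖b‖ := real_inner_le_norm a b
    have h4 : 1 / 4 * ((u x) ^ 2 - 1) ^ 2 ≤ h3 x + 1 / 4 * ((w x) ^ 2 - 1) ^ 2 := by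
      simp only [hh3]
      nlinarith [sq_nonneg (u x - w x), sq_nonneg (u x + w x),
        sq_nonneg ((u x) ^ 2 - (w x) ^ 2), sq_nonneg ((u x) ^ 2 - u x * w x)]
    have h5 : 1 / 2 * ‖a‖ ^ 2 ≤ g x + 1 / 2 * ‖b‖ ^ 2 := by
      rw [h1]; nlinarith [sq_nonneg (‖a‖ - ‖b‖)]
    have := mul_le_mul_of_nonneg_left h4 hc0.le
    simp only [hfU, hfW]
    nlinarith
  -- integral inequality
  have key : ∫ x in Ω, fU x ≤ ∫ x in Ω, (g x + c * h3 x + fW x) := by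
    apply setIntegral_mono_on iU ((ig.add (ih3.const_mul c)).add iW) hΩop.measurableSet
    intro x _; exact hpt x
  have hsplit : ∫ x in Ω, (g x + c * h3 x + fW x)
      = (∫ x in Ω, g x) + c * (∫ x in Ω, h3 x) + ∫ x in Ω, fW x := by
    have i2 : Integrable (fun x => c * h3 x) (volume.restrict Ω) := ih3.const_mul c
    have i1 : Integrable (fun x => g x + c * h3 x) (volume.restrict Ω) := ig.add i2
    rw [integral_add i1 iW, integral_add ig i2, integral_const_mul]
  have hJu : J u = ∫ x in Ω, fU x := by rw [hJ u]
  have hJw : J w = ∫ x in Ω, fW x := by rw [hJ w]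
  have hmain : J u + 1 / k * (∫ x in Ω, (u x - w x) ^ 2) ≤ J w := by
    rw [hJu, hJw]
    have hG : (∫ x in Ω, g x) + c * (∫ x in Ω, h3 x)
        = -(1 / k * (∫ x in Ω, (u x - w x) ^ 2)) := by
      have := hscheme; linarith
    rw [hsplit, hG] at key
    linarith
  have hnn : 0 ≤ 1 / k * (∫ x in Ω, (u x - w x) ^ 2) := by
    apply mul_nonneg (by positivity)
    apply integral_nonneg
    intro x; positivity
  exact ⟨by linarith, hmain⟩
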